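/- Let ħ > 0, q, m real with m > 0, a₀ > 0 a constant, ε ∈ {−1, 0, 1}, and suppose the nowhere-vanishing smooth function Ω satisfies the equation −(ħ²/2) □_g ln|Ω²/a| + (ħ²/4) g^{μν} ∂_μ ln|Ω²/a| ∂_ν ln|Ω²/a| − Ω⁻² [ ε m² + q²/(β² a²) ] = −m² on ℝ⁴. Let ψ : ℝ⁴ → ℂ be smooth and set ψ̄ := m |Ω² a₀/a|^{1/2} ψ. Then ψ̄ satisfies |det g|^{−1/2} (ħ∂_μ − iqA_μ − (ħ/2)u_μ)[ |det g|^{1/2} g^{μν} (ħ∂_ν − iqA_ν − (ħ/2)u_ν) ψ̄ ] = { −(ħ²/2) □_g ln|Ω²/a| + (ħ²/4) g^{μν} u_μ u_ν − ε m² Ω⁻² − Ω⁻² q²/(β² a²) } ψ̄, where u_μ = ∂_μ ln|Ω²/a|, if and only if ψ satisfies the 4-dimensional Klein–Gordon equation with respect to g: |det g|^{−1/2} (ħ∂_μ − iqA_μ)[ |det g|^{1/2} g^{μν} (ħ∂_ν − iqA_ν) ψ ] + m² ψ = 0. -/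

import Mathlib

open scoped BigOperators

/-- Partial derivative in the μ-th coordinate direction. -/
noncomputable def pd {ι : Type*} [Fintype ι] [DecidableEq ι] {F : Type*}
    [NormedAddCommGroup F] [NormedSpace ℝ F]
    (f : (ι → ℝ) → F) (μ : ι) (x : ι → ℝ) : F :=
  fderiv ℝ f x (Pi.single μ 1)

/-- Coordinate d'Alembertian: □_h f = |det h|^{−1/2} ∂_M( |det h|^{1/2} h^{MN} ∂_N f ). -/
noncomputable def box {ι : Type*} [Fintype ι] [DecidableEq ι] {F : Type*}
    [NormedAddCommGroup F] [NormedSpace ℝ F]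
    (h : (ι → ℝ) → Matrix ι ι ℝ) (f : (ι → ℝ) → F) (x : ι → ℝ) : F :=
  (Real.sqrt |(h x).det|)⁻¹ •
    ∑ μ : ι, pd (fun z => ∑ ν : ι, (Real.sqrt |(h z).det| * (h z)⁻¹ μ ν) • pd f ν z) μ x

/-- The function ln|Ω²/a|. -/
noncomputable def lnOa (Ω a : (Fin 4 → ℝ) → ℝ) (z : Fin 4 → ℝ) : ℝ :=
  Real.log |(Ω z)^2 / a z|

/-- The flux |det g|^{1/2} g^{μν} (hb∂_ν − iqA_ν − (hb/2)∂_ν w) ψ. -/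
noncomputable def KGfluxU (g : (Fin 4 → ℝ) → Matrix (Fin 4) (Fin 4) ℝ)
    (A : (Fin 4 → ℝ) → Fin 4 → ℝ) (hb q : ℝ) (w : (Fin 4 → ℝ) → ℝ)
    (ψ : (Fin 4 → ℝ) → ℂ) (μ : Fin 4) (z : Fin 4 → ℝ) : ℂ :=
  (Real.sqrt |(g z).det| : ℂ) * ∑ ν : Fin 4, ((g z)⁻¹ μ ν : ℂ) *
    ((hb : ℂ) * pd ψ ν z - Complex.I * (q : ℂ) * (A z ν : ℂ) * ψ z
      - ((hb/2 : ℝ) : ℂ) * ((pd w ν z : ℝ) : ℂ) * ψ z)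

/-- The operator |det g|^{−1/2} (hb∂_μ − iqA_μ − (hb/2)∂_μ w)[ |det g|^{1/2} g^{μν}
(hb∂_ν − iqA_ν − (hb/2)∂_ν w) ψ ]. -/
noncomputable def KGopU (g : (Fin 4 → ℝ) → Matrix (Fin 4) (Fin 4) ℝ)
    (A : (Fin 4 → ℝ) → Fin 4 → ℝ) (hb q : ℝ) (w : (Fin 4 → ℝ) → ℝ)
    (ψ : (Fin 4 → ℝ) → ℂ) (x : Fin 4 → ℝ) : ℂ :=
  ((Real.sqrt |(g x).det| : ℝ) : ℂ)⁻¹ *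
    ∑ μ : Fin 4, ((hb : ℂ) * pd (fun z => KGfluxU g A hb q w ψ μ z) μ x
      - Complex.I * (q : ℂ) * (A x μ : ℂ) * KGfluxU g A hb q w ψ μ x
      - ((hb/2 : ℝ) : ℂ) * ((pd w μ x : ℝ) : ℂ) * KGfluxU g A hb q w ψ μ x)

/-- The minimally-coupled Klein–Gordon operator
|det g|^{−1/2} (hb∂_μ − iqA_μ)[ |det g|^{1/2} g^{μν} (hb∂_ν − iqA_ν) ψ ]. -/
noncomputable def KGop (g : (Fin 4 → ℝ) → Matrix (Fin 4) (Fin 4) ℝ)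
    (A : (Fin 4 → ℝ) → Fin 4 → ℝ) (hb q : ℝ)
    (ψ : (Fin 4 → ℝ) → ℂ) (x : Fin 4 → ℝ) : ℂ :=
  ((Real.sqrt |(g x).det| : ℝ) : ℂ)⁻¹ *
    ∑ μ : Fin 4, ((hb : ℂ) * pd (fun z => (Real.sqrt |(g z).det| : ℂ) *
        ∑ ν : Fin 4, ((g z)⁻¹ μ ν : ℂ) *
          ((hb : ℂ) * pd ψ ν z - Complex.I * (q : ℂ) * (A z ν : ℂ) * ψ z)) μ x
      - Complex.I * (q : ℂ) * (A x μ : ℂ) * ((Real.sqrt |(g x).det| : ℂ) *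
        ∑ ν : Fin 4, ((g x)⁻¹ μ ν : ℂ) *
          ((hb : ℂ) * pd ψ ν x - Complex.I * (q : ℂ) * (A x ν : ℂ) * ψ x)))


section AuxLemmas

/-- The ordinary (w = 0) flux. -/
noncomputable def flux0 (g : (Fin 4 → ℝ) → Matrix (Fin 4) (Fin 4) ℝ)
    (A : (Fin 4 → ℝ) → Fin 4 → ℝ) (hb q : ℝ) (ψ : (Fin 4 → ℝ) → ℂ) (μ : Fin 4) :
    (Fin 4 → ℝ) → ℂ :=
  fun z => (Real.sqrt |(g z).det| : ℂ) * ∑ ν : Fin 4, ((g z)⁻¹ μ ν : ℂ) *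
    ((hb : ℂ) * pd ψ ν z - Complex.I * (q : ℂ) * (A z ν : ℂ) * ψ z)

theorem flux0_def (g : (Fin 4 → ℝ) → Matrix (Fin 4) (Fin 4) ℝ)
    (A : (Fin 4 → ℝ) → Fin 4 → ℝ) (hb q : ℝ) (ψ : (Fin 4 → ℝ) → ℂ) (μ : Fin 4) :
    flux0 g A hb q ψ μ = fun z =>
      (Real.sqrt |(g z).det| : ℂ) * ∑ ν : Fin 4, ((g z)⁻¹ μ ν : ℂ) *
        ((hb : ℂ) * pd ψ ν z - Complex.I * (q : ℂ) * (A z ν : ℂ) * ψ z) := rfl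

/-- The rescaling function. -/
noncomputable def cfun (m a₀ : ℝ) (Ω a : (Fin 4 → ℝ) → ℝ) (z : Fin 4 → ℝ) : ℝ :=
  m * Real.sqrt a₀ * Real.exp (lnOa Ω a z / 2)

theorem aux_contDiff_det (M : (Fin 4 → ℝ) → Matrix (Fin 4) (Fin 4) ℝ)
    (hM : ∀ i j, ContDiff ℝ (⊤ : ℕ∞) fun z => M z i j) :
    ContDiff ℝ (⊤ : ℕ∞) fun z => (M z).det := by
  simp only [Matrix.det_apply, Units.smul_def, zsmul_eq_mul]
  exact ContDiff.sum fun σ _ => contDiff_const.mul (contDiff_prod fun i _ => hM _ _)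

theorem aux_contDiff_inv_entry (g : (Fin 4 → ℝ) → Matrix (Fin 4) (Fin 4) ℝ)
    (hg : ∀ i j, ContDiff ℝ (⊤ : ℕ∞) fun z => g z i j)
    (hginv : ∀ x, IsUnit (g x).det) (μ ν : Fin 4) :
    ContDiff ℝ (⊤ : ℕ∞) fun z => (g z)⁻¹ μ ν := by
  have hdet : ContDiff ℝ (⊤ : ℕ∞) fun z => (g z).det := aux_contDiff_det g hg
  have hdet0 : ∀ z, (g z).det ≠ 0 := fun z => (hginv z).ne_zero
  have hadj : ContDiff ℝ (⊤ : ℕ∞) fun z => (g z).adjugate μ ν := by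
    simp only [Matrix.adjugate_apply]
    refine aux_contDiff_det _ fun i j => ?_
    by_cases h : i = ν <;> simp [Matrix.updateRow_apply, h] <;>
      first | exact contDiff_const | exact hg _ _
  have hrw : ∀ z, (g z)⁻¹ μ ν = ((g z).det)⁻¹ * (g z).adjugate μ ν := by
    intro z
    rw [Matrix.inv_def, Ring.inverse_eq_inv']
    simp [Matrix.smul_apply, smul_eq_mul]
  simp only [hrw]
  exact (hdet.inv hdet0).mul hadj

theorem aux_contDiffAt_sqrt_abs (f : (Fin 4 → ℝ) → ℝ) (hf : ContDiff ℝ (⊤ : ℕ∞) f)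
    (h0 : ∀ z, f z ≠ 0) (x : Fin 4 → ℝ) :
    ContDiffAt ℝ (⊤ : ℕ∞) (fun z => Real.sqrt |f z|) x := by
  rcases lt_or_gt_of_ne (h0 x) with h | h
  · have hev : (fun z => Real.sqrt |f z|) =ᶠ[nhds x] fun z => Real.sqrt (-(f z)) := by
      filter_upwards [hf.continuous.continuousAt.preimage_mem_nhds
        (IsOpen.mem_nhds isOpen_Iio h)] with z hz
      rw [abs_of_neg hz]
    exact ((hf.neg.contDiffAt).sqrt (by simpa using h0 x)).congr_of_eventuallyEq hev
  · have hev : (fun z => Real.sqrt |f z|) =ᶠ[nhds x] fun z => Real.sqrt (f z) := by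
      filter_upwards [hf.continuous.continuousAt.preimage_mem_nhds
        (IsOpen.mem_nhds isOpen_Ioi h)] with z hz
      rw [abs_of_pos hz]
    exact (hf.contDiffAt.sqrt (h0 x)).congr_of_eventuallyEq hev

theorem aux_pd_mul {f g : (Fin 4 → ℝ) → ℂ} {x : Fin 4 → ℝ} (μ : Fin 4)
    (hf : DifferentiableAt ℝ f x) (hg : DifferentiableAt ℝ g x) :
    pd (fun z => f z * g z) μ x = pd f μ x * g x + f x * pd g μ x := by
  unfold pd
  rw [fderiv_fun_mul hf hg]
  simp [smul_eq_mul]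
  ring

theorem aux_pd_ofReal {f : (Fin 4 → ℝ) → ℝ} {x : Fin 4 → ℝ} (μ : Fin 4)
    (hf : DifferentiableAt ℝ f x) :
    pd (fun z => ((f z : ℝ) : ℂ)) μ x = ((pd f μ x : ℝ) : ℂ) := by
  unfold pd
  have h : (fun z => ((f z : ℝ) : ℂ)) = (⇑Complex.ofRealCLM ∘ f) := rfl
  rw [h, (Complex.ofRealCLM.hasFDerivAt.comp x hf.hasFDerivAt).fderiv]
  rfl

section CfunLemmas
variable {Ω a : (Fin 4 → ℝ) → ℝ} {m a₀ : ℝ}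

theorem aux_contDiff_lnOa (hΩ : ContDiff ℝ (⊤ : ℕ∞) Ω) (hΩ0 : ∀ z, Ω z ≠ 0)
    (ha : ContDiff ℝ (⊤ : ℕ∞) a) (hapos : ∀ z, 0 < a z) :
    ContDiff ℝ (⊤ : ℕ∞) (lnOa Ω a) := by
  have : lnOa Ω a = fun z => Real.log ((Ω z)^2 / a z) := by
    funext z; rw [lnOa, Real.log_abs]
  rw [this]
  exact ContDiff.log ((hΩ.pow 2).div ha fun z => (hapos z).ne')
    fun z => div_ne_zero (pow_ne_zero 2 (hΩ0 z)) (hapos z).ne'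

theorem aux_cfun_eq (hΩ0 : ∀ z, Ω z ≠ 0) (hapos : ∀ z, 0 < a z) (ha₀ : 0 < a₀)
    (z : Fin 4 → ℝ) : m * Real.sqrt |(Ω z)^2 * a₀ / a z| = cfun m a₀ Ω a z := by
  have hΩz := hΩ0 z
  have haz := hapos z
  have hpos : 0 < (Ω z)^2 / a z := div_pos (by positivity) haz
  have h1 : |(Ω z)^2 * a₀ / a z| = a₀ * ((Ω z)^2 / a z) := by
    rw [abs_of_pos (by positivity)]; ring
  have h2 : Real.exp (lnOa Ω a z / 2) = Real.sqrt ((Ω z)^2 / a z) := by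
    rw [lnOa, Real.log_abs, Real.sqrt_eq_rpow, Real.rpow_def_of_pos hpos]
    ring_nf
  rw [cfun, h1, h2, Real.sqrt_mul ha₀.le]
  ring

theorem aux_cfun_pos (hm : 0 < m) (ha₀ : 0 < a₀) (z : Fin 4 → ℝ) :
    0 < cfun m a₀ Ω a z := by
  have := Real.exp_pos (lnOa Ω a z / 2)
  have := Real.sqrt_pos.2 ha₀
  rw [cfun]; positivity

theorem aux_contDiff_cfun (hΩ : ContDiff ℝ (⊤ : ℕ∞) Ω) (hΩ0 : ∀ z, Ω z ≠ 0)
    (ha : ContDiff ℝ (⊤ : ℕ∞) a) (hapos : ∀ z, 0 < a z) :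
    ContDiff ℝ (⊤ : ℕ∞) (cfun m a₀ Ω a) :=
  contDiff_const.mul ((aux_contDiff_lnOa hΩ hΩ0 ha hapos).div_const 2).exp

theorem aux_pd_cfun (hΩ : ContDiff ℝ (⊤ : ℕ∞) Ω) (hΩ0 : ∀ z, Ω z ≠ 0)
    (ha : ContDiff ℝ (⊤ : ℕ∞) a) (hapos : ∀ z, 0 < a z) (ν : Fin 4) (x : Fin 4 → ℝ) :
    pd (cfun m a₀ Ω a) ν x = cfun m a₀ Ω a x / 2 * pd (lnOa Ω a) ν x := by
  have hw := aux_contDiff_lnOa hΩ hΩ0 ha hapos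
  have h1 : HasFDerivAt (lnOa Ω a) (fderiv ℝ (lnOa Ω a) x) x :=
    (hw.differentiable (by simp) x).hasFDerivAt
  have h2 : HasFDerivAt (fun z => lnOa Ω a z / 2)
      ((1/2 : ℝ) • fderiv ℝ (lnOa Ω a) x) x := by
    simpa [div_eq_inv_mul, smul_smul] using h1.fun_const_smul (1/2 : ℝ)
  have h3 := h2.exp.const_mul (m * Real.sqrt a₀)
  have h4 : HasFDerivAt (cfun m a₀ Ω a)
      ((m * Real.sqrt a₀) • (Real.exp (lnOa Ω a x / 2) •
        ((1/2 : ℝ) • fderiv ℝ (lnOa Ω a) x))) x := h3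
  rw [pd, h4.fderiv]
  simp [pd, cfun, smul_eq_mul]
  ring

end CfunLemmas

/-- Master rescaling identity: KGopU applied to the rescaled field equals the
rescaling function times KGop applied to the original field. -/
theorem aux_key (g : (Fin 4 → ℝ) → Matrix (Fin 4) (Fin 4) ℝ)
    (A : (Fin 4 → ℝ) → Fin 4 → ℝ) (a Ω : (Fin 4 → ℝ) → ℝ)
    (hg : ∀ μ ν, ContDiff ℝ (⊤ : ℕ∞) (fun x => g x μ ν))
    (hginv : ∀ x, IsUnit (g x).det)
    (hA : ∀ μ, ContDiff ℝ (⊤ : ℕ∞) (fun x => A x μ))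
    (ha : ContDiff ℝ (⊤ : ℕ∞) a) (hapos : ∀ x, 0 < a x)
    (hΩ : ContDiff ℝ (⊤ : ℕ∞) Ω) (hΩ0 : ∀ x, Ω x ≠ 0)
    (hb q m a₀ : ℝ)
    (ψ : (Fin 4 → ℝ) → ℂ) (hψ : ContDiff ℝ (⊤ : ℕ∞) ψ) (x : Fin 4 → ℝ) :
    KGopU g A hb q (lnOa Ω a)
        (fun z => ((cfun m a₀ Ω a z : ℝ) : ℂ) * ψ z) x
      = ((cfun m a₀ Ω a x : ℝ) : ℂ) * KGop g A hb q ψ x := by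
  have hdet0 : ∀ z, (g z).det ≠ 0 := fun z => (hginv z).ne_zero
  have hdetC : ContDiff ℝ (⊤ : ℕ∞) fun z => (g z).det := aux_contDiff_det g hg
  have hψd : ∀ z, DifferentiableAt ℝ ψ z := fun z =>
    (hψ.differentiable (by simp)) z
  have hcreal : ∀ z, DifferentiableAt ℝ (cfun m a₀ Ω a) z := fun z =>
    ((aux_contDiff_cfun hΩ hΩ0 ha hapos).differentiable (by simp)) z
  have hcC : ∀ z, DifferentiableAt ℝ (fun z' => ((cfun m a₀ Ω a z' : ℝ) : ℂ)) z :=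
    fun z => Complex.ofRealCLM.differentiableAt.comp z (hcreal z)
  have hsC : ∀ z, DifferentiableAt ℝ (fun z' => ((Real.sqrt |(g z').det| : ℝ) : ℂ)) z :=
    fun z => Complex.ofRealCLM.differentiableAt.comp z
      ((aux_contDiffAt_sqrt_abs _ hdetC hdet0 z).differentiableAt (by simp))
  have hinvC : ∀ μ ν z, DifferentiableAt ℝ (fun z' => (((g z')⁻¹ μ ν : ℝ) : ℂ)) z :=
    fun μ ν z => Complex.ofRealCLM.differentiableAt.comp z
      (((aux_contDiff_inv_entry g hg hginv μ ν).differentiable (by simp)) z)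
  have hAC : ∀ ν z, DifferentiableAt ℝ (fun z' => ((A z' ν : ℝ) : ℂ)) z :=
    fun ν z => Complex.ofRealCLM.differentiableAt.comp z
      (((hA ν).differentiable (by simp)) z)
  have hpdψd : ∀ ν z, DifferentiableAt ℝ (pd ψ ν) z := by
    intro ν z
    have : ContDiff ℝ (⊤ : ℕ∞) (pd ψ ν) :=
      (hψ.fderiv_right (by exact_mod_cast le_top)).clm_apply contDiff_const
    exact (this.differentiable (by simp)) z
  have hFluxd : ∀ μ z, DifferentiableAt ℝ (flux0 g A hb q ψ μ) z := by
    intro μ z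
    rw [flux0_def]
    refine (hsC z).mul (DifferentiableAt.fun_sum fun ν _ => ?_)
    exact (hinvC μ ν z).mul
      (((hpdψd ν z).const_mul _).sub (((hAC ν z).const_mul
        (Complex.I * (q : ℂ))).mul (hψd z)))
  have hpoc : ∀ ν z, pd (fun z' => ((cfun m a₀ Ω a z' : ℝ) : ℂ)) ν z
      = ((pd (cfun m a₀ Ω a) ν z : ℝ) : ℂ) := fun ν z => aux_pd_ofReal ν (hcreal z)
  -- Step A: flux rescaling
  have hflz : ∀ μ z, KGfluxU g A hb q (lnOa Ω a)
      (fun z' => ((cfun m a₀ Ω a z' : ℝ) : ℂ) * ψ z') μ z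
      = ((cfun m a₀ Ω a z : ℝ) : ℂ) * flux0 g A hb q ψ μ z := by
    intro μ z
    have hpdprod : ∀ ν, pd (fun z' => ((cfun m a₀ Ω a z' : ℝ) : ℂ) * ψ z') ν z
        = pd (fun z' => ((cfun m a₀ Ω a z' : ℝ) : ℂ)) ν z * ψ z
          + ((cfun m a₀ Ω a z : ℝ) : ℂ) * pd ψ ν z :=
      fun ν => aux_pd_mul ν (hcC z) (hψd z)
    simp only [KGfluxU, flux0]
    have hsum : ∀ ν : Fin 4, ((g z)⁻¹ μ ν : ℂ) *
        ((hb : ℂ) * pd (fun z' => ((cfun m a₀ Ω a z' : ℝ) : ℂ) * ψ z') ν z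
          - Complex.I * (q : ℂ) * (A z ν : ℂ)
              * (((cfun m a₀ Ω a z : ℝ) : ℂ) * ψ z)
          - ((hb/2 : ℝ) : ℂ) * ((pd (lnOa Ω a) ν z : ℝ) : ℂ)
              * (((cfun m a₀ Ω a z : ℝ) : ℂ) * ψ z))
        = ((cfun m a₀ Ω a z : ℝ) : ℂ) * (((g z)⁻¹ μ ν : ℂ) *
            ((hb : ℂ) * pd ψ ν z - Complex.I * (q : ℂ) * (A z ν : ℂ) * ψ z)) := by
      intro ν
      rw [hpdprod ν, hpoc ν z, aux_pd_cfun hΩ hΩ0 ha hapos ν z]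
      push_cast
      ring
    rw [Finset.sum_congr rfl fun ν _ => hsum ν, ← Finset.mul_sum]
    ring
  have hflfun : ∀ μ, (fun z => KGfluxU g A hb q (lnOa Ω a)
      (fun z' => ((cfun m a₀ Ω a z' : ℝ) : ℂ) * ψ z') μ z)
      = fun z => ((cfun m a₀ Ω a z : ℝ) : ℂ) * flux0 g A hb q ψ μ z :=
    fun μ => funext (hflz μ)
  -- Step B: derivative of the rescaled flux
  have hpm : ∀ μ, pd (fun z' => ((cfun m a₀ Ω a z' : ℝ) : ℂ)
        * flux0 g A hb q ψ μ z') μ x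
      = pd (fun z' => ((cfun m a₀ Ω a z' : ℝ) : ℂ)) μ x * flux0 g A hb q ψ μ x
        + ((cfun m a₀ Ω a x : ℝ) : ℂ) * pd (flux0 g A hb q ψ μ) μ x :=
    fun μ => aux_pd_mul μ (hcC x) (hFluxd μ x)
  have hpdfl : ∀ μ : Fin 4, pd (fun z => ((cfun m a₀ Ω a z : ℝ) : ℂ)
        * flux0 g A hb q ψ μ z) μ x
      = ((cfun m a₀ Ω a x / 2 * pd (lnOa Ω a) μ x : ℝ) : ℂ) * flux0 g A hb q ψ μ x
        + ((cfun m a₀ Ω a x : ℝ) : ℂ) * pd (flux0 g A hb q ψ μ) μ x := by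
    intro μ
    rw [hpm μ, hpoc μ x, aux_pd_cfun hΩ hΩ0 ha hapos μ x]
  rw [KGopU, KGop]
  simp only [hflz]
  simp only [hpdfl]
  have hterm : ∀ μ : Fin 4,
      (hb : ℂ) * (((cfun m a₀ Ω a x / 2 * pd (lnOa Ω a) μ x : ℝ) : ℂ)
          * flux0 g A hb q ψ μ x
        + ((cfun m a₀ Ω a x : ℝ) : ℂ) * pd (flux0 g A hb q ψ μ) μ x)
      - Complex.I * (q : ℂ) * (A x μ : ℂ)
          * (((cfun m a₀ Ω a x : ℝ) : ℂ) * flux0 g A hb q ψ μ x)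
      - ((hb/2 : ℝ) : ℂ) * ((pd (lnOa Ω a) μ x : ℝ) : ℂ)
          * (((cfun m a₀ Ω a x : ℝ) : ℂ) * flux0 g A hb q ψ μ x)
      = ((cfun m a₀ Ω a x : ℝ) : ℂ) *
          ((hb : ℂ) * pd (flux0 g A hb q ψ μ) μ x
            - Complex.I * (q : ℂ) * (A x μ : ℂ) * flux0 g A hb q ψ μ x) := by
    intro μ
    push_cast
    ring
  rw [Finset.sum_congr rfl fun μ _ => hterm μ, ← Finset.mul_sum]
  simp only [flux0_def]
  ring

end AuxLemmas

/-- given that Ω solves the conformal-factor equation, ψ̄ = m|Ω²a₀/a|^{1/2}ψ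
solves the u-modified equation iff ψ solves the 4-dimensional Klein–Gordon equation. -/
theorem conformal_rescaling_klein_gordon
    (g : (Fin 4 → ℝ) → Matrix (Fin 4) (Fin 4) ℝ)
    (A : (Fin 4 → ℝ) → Fin 4 → ℝ) (a Ω : (Fin 4 → ℝ) → ℝ) (β : ℝ)
    (hg : ∀ μ ν, ContDiff ℝ (⊤ : ℕ∞) (fun x => g x μ ν))
    (hgsymm : ∀ x, (g x).IsSymm)
    (hginv : ∀ x, IsUnit (g x).det)
    (hA : ∀ μ, ContDiff ℝ (⊤ : ℕ∞) (fun x => A x μ))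
    (ha : ContDiff ℝ (⊤ : ℕ∞) a) (hapos : ∀ x, 0 < a x)
    (hΩ : ContDiff ℝ (⊤ : ℕ∞) Ω) (hΩ0 : ∀ x, Ω x ≠ 0)
    (hβ : β ≠ 0)
    (hb q m a₀ ε : ℝ) (hhb : 0 < hb) (hm : 0 < m) (ha₀ : 0 < a₀)
    (hε : ε = -1 ∨ ε = 0 ∨ ε = 1)
    -- Ω satisfies the conformal-factor equation
    (hΩeq : ∀ x : Fin 4 → ℝ,
      -(hb^2/2) * box g (lnOa Ω a) x
        + (hb^2/4) * ∑ μ : Fin 4, ∑ ν : Fin 4, (g x)⁻¹ μ ν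
            * pd (lnOa Ω a) μ x * pd (lnOa Ω a) ν x
        - ((Ω x)^2)⁻¹ * (ε * m^2 + q^2 / (β^2 * (a x)^2)) = -(m^2))
    (ψ : (Fin 4 → ℝ) → ℂ) (hψ : ContDiff ℝ (⊤ : ℕ∞) ψ) :
    (∀ x : Fin 4 → ℝ,
      KGopU g A hb q (lnOa Ω a)
          (fun z => ((m * Real.sqrt |(Ω z)^2 * a₀ / a z| : ℝ) : ℂ) * ψ z) x
        = ((-(hb^2/2) * box g (lnOa Ω a) x
            + (hb^2/4) * ∑ μ : Fin 4, ∑ ν : Fin 4, (g x)⁻¹ μ ν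
                * pd (lnOa Ω a) μ x * pd (lnOa Ω a) ν x
            - ε * m^2 * ((Ω x)^2)⁻¹
            - ((Ω x)^2)⁻¹ * q^2 / (β^2 * (a x)^2) : ℝ) : ℂ)
            * (((m * Real.sqrt |(Ω x)^2 * a₀ / a x| : ℝ) : ℂ) * ψ x)) ↔
    (∀ x : Fin 4 → ℝ, KGop g A hb q ψ x + ((m : ℂ))^2 * ψ x = 0) := by
  have hceq : ∀ z : Fin 4 → ℝ,
      m * Real.sqrt |(Ω z)^2 * a₀ / a z| = cfun m a₀ Ω a z :=
    aux_cfun_eq hΩ0 hapos ha₀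
  simp only [hceq]
  have hkey := aux_key g A a Ω hg hginv hA ha hapos hΩ hΩ0 hb q m a₀ ψ hψ
  have hcoef : ∀ x : Fin 4 → ℝ,
      -(hb^2/2) * box g (lnOa Ω a) x
        + (hb^2/4) * ∑ μ : Fin 4, ∑ ν : Fin 4, (g x)⁻¹ μ ν
            * pd (lnOa Ω a) μ x * pd (lnOa Ω a) ν x
        - ε * m^2 * ((Ω x)^2)⁻¹
        - ((Ω x)^2)⁻¹ * q^2 / (β^2 * (a x)^2) = -(m^2) := by
    intro x
    linear_combination hΩeq x
  have hcoefC : ∀ x : Fin 4 → ℝ,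
      ((-(hb^2/2) * box g (lnOa Ω a) x
        + (hb^2/4) * ∑ μ : Fin 4, ∑ ν : Fin 4, (g x)⁻¹ μ ν
            * pd (lnOa Ω a) μ x * pd (lnOa Ω a) ν x
        - ε * m^2 * ((Ω x)^2)⁻¹
        - ((Ω x)^2)⁻¹ * q^2 / (β^2 * (a x)^2) : ℝ) : ℂ) = -((m : ℂ))^2 := by
    intro x
    rw [hcoef x]
    push_cast
    ring
  have hc0 : ∀ x : Fin 4 → ℝ, ((cfun m a₀ Ω a x : ℝ) : ℂ) ≠ 0 := fun x => by
    exact_mod_cast (aux_cfun_pos hm ha₀ x).ne'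
  constructor
  · intro H x
    have h := H x
    rw [hkey x, hcoefC x] at h
    have h2 : ((cfun m a₀ Ω a x : ℝ) : ℂ)
        * (KGop g A hb q ψ x + ((m : ℂ))^2 * ψ x) = 0 := by
      linear_combination h
    exact (mul_eq_zero.1 h2).resolve_left (hc0 x)
  · intro H x
    rw [hkey x, hcoefC x]
    linear_combination ((cfun m a₀ Ω a x : ℝ) : ℂ) * H x
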